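/- Let p and q be two distinct points of the Euclidean plane ℝ² and let U = ℝ² \ {p,q}, so that ∂U = {p,q}, and define ρ_U(x,y) = max{log(1 + |x−y|/(|x−p|·|y−p|)), log(1 + |x−y|/(|x−q|·|y−q|))} for x,y ∈ U, where |·| denotes Euclidean distance. Then for every ε > 1 there exist points x, y, z, t ∈ U such that exp((ε/2)ρ_U(x,y) + (ε/2)ρ_U(z,t)) > exp((ε/2)ρ_U(x,z) + (ε/2)ρ_U(y,t)) + exp((ε/2)ρ_U(x,t) + (ε/2)ρ_U(y,z)); that is, (U, ρ_U) is not strongly hyperbolic with any parameter larger than 1. -/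

import Mathlib

noncomputable def rhoPQ (p q x y : EuclideanSpace ℝ (Fin 2)) : ℝ :=
  max (Real.log (1 + dist x y / (dist x p * dist y p)))
      (Real.log (1 + dist x y / (dist x q * dist y q)))

private lemma dist_line (p q : EuclideanSpace ℝ (Fin 2)) (a b : ℝ) :
    dist (p + a • (q - p)) (p + b • (q - p)) = |a - b| * dist q p := by
  rw [dist_eq_norm, dist_eq_norm]
  have h : (p + a • (q - p)) - (p + b • (q - p)) = (a - b) • (q - p) := by
    rw [sub_smul]; abel
  rw [h, norm_smul, Real.norm_eq_abs]

private lemma dist_line_p (p q : EuclideanSpace ℝ (Fin 2)) (a : ℝ) :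
    dist (p + a • (q - p)) p = |a| * dist q p := by
  have h := dist_line p q a 0
  simpa using h

private lemma dist_line_q (p q : EuclideanSpace ℝ (Fin 2)) (a : ℝ) :
    dist (p + a • (q - p)) q = |a - 1| * dist q p := by
  have h1 : q = p + (1:ℝ) • (q - p) := by simp
  have h := dist_line p q a 1
  rwa [← h1] at h

private lemma rho_le_log (p q x y : EuclideanSpace ℝ (Fin 2)) (C : ℝ)
    (h1 : 1 + dist x y / (dist x p * dist y p) ≤ C)
    (h2 : 1 + dist x y / (dist x q * dist y q) ≤ C) :
    rhoPQ p q x y ≤ Real.log C := by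
  unfold rhoPQ
  have hp1 : (0:ℝ) < 1 + dist x y / (dist x p * dist y p) := by positivity
  have hp2 : (0:ℝ) < 1 + dist x y / (dist x q * dist y q) := by positivity
  exact max_le (Real.log_le_log hp1 h1) (Real.log_le_log hp2 h2)

private lemma ratio_bound (N u v s L : ℝ) (hN : 0 ≤ N) (hu : 0 < u) (hv : 0 < v)
    (hs0 : 0 < s) (hs1 : s < 1) (hL : 0 < L)
    (hkey : N * (s * (1 - s)) ≤ u * v) :
    1 + (N * L) / ((u * L) * (v * L)) ≤ 1 + 1 / (s * (1 - s) * L) := by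
  have hE : (0:ℝ) < s * (1 - s) * L := by
    have h1 : (0:ℝ) < 1 - s := by linarith
    positivity
  have h1 : (N * L) / ((u * L) * (v * L)) ≤ 1 / (s * (1 - s) * L) := by
    rw [div_le_div_iff₀ (by positivity) hE]
    have hmul := mul_le_mul_of_nonneg_right hkey (mul_nonneg hL.le hL.le)
    nlinarith [hmul]
  linarith

private lemma arith_xz (s : ℝ) (h0 : 0 < s) : (1 + 2*s) * (s * (1 - s)) ≤ (1 + s) * s := by
  nlinarith [mul_nonneg (mul_nonneg h0.le h0.le) h0.le]

private lemma arith_yt (s : ℝ) (h0 : 0 < s) (h2 : s ≤ 1/2) :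
    (1 - 2*s) * (s * (1 - s)) ≤ (1 - s) * s := by
  nlinarith [mul_nonneg (mul_nonneg h0.le h0.le) (by linarith : (0:ℝ) ≤ 1 - s)]

private lemma arith_xt (s : ℝ) (h0 : 0 < s) : 1 * (s * (1 - s)) ≤ (1 + s) * s := by
  nlinarith [mul_nonneg h0.le h0.le]

private lemma arith_eq (s : ℝ) : 1 * (s * (1 - s)) ≤ (1 - s) * s := by nlinarith []

private lemma poly_ineq (s L r : ℝ) (hs0 : 0 < s) (hs2 : s ≤ 1/2) (hL : 0 < L)
    (hr1 : 1 < r) (hr2 : r < 2)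
    (hsH : s * (2 * ((r - 1) * L + 2 * r)) ≤ 2 - r) :
    r * (s * (1 - s) * L) + r < s * (1 - s) * L + 2 * (1 - s) := by
  nlinarith [mul_nonneg (mul_nonneg (mul_nonneg (by linarith : (0:ℝ) ≤ r - 1) hs0.le) hs0.le) hL.le,
    mul_nonneg hs0.le (by linarith : (0:ℝ) ≤ r - 1)]

set_option maxHeartbeats 1000000 in
theorem stmt_9 (p q : EuclideanSpace ℝ (Fin 2)) (hpq : p ≠ q)
    (U : Set (EuclideanSpace ℝ (Fin 2))) (hUdef : U = {p, q}ᶜ)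
    (ε : ℝ) (hε : 1 < ε) :
    ∃ x ∈ U, ∃ y ∈ U, ∃ z ∈ U, ∃ t ∈ U,
      Real.exp ((ε / 2) * rhoPQ p q x z + (ε / 2) * rhoPQ p q y t) +
        Real.exp ((ε / 2) * rhoPQ p q x t + (ε / 2) * rhoPQ p q y z) <
      Real.exp ((ε / 2) * rhoPQ p q x y + (ε / 2) * rhoPQ p q z t) := by
  subst hUdef
  have hεpos : (0:ℝ) < ε := by linarith
  set L : ℝ := dist q p with hLdef
  have hL : 0 < L := dist_pos.mpr (Ne.symm hpq)
  set r : ℝ := (2:ℝ) ^ (1/ε) with hrdef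
  have hr1 : 1 < r := by
    rw [hrdef]
    exact (Real.one_lt_rpow_iff_of_pos (by norm_num)).mpr
      (Or.inl ⟨by norm_num, by positivity⟩)
  have h1e : 1/ε < 1 := by rw [div_lt_one hεpos]; exact hε
  have hr2 : r < 2 := by
    have h : (2:ℝ) ^ (1/ε) < (2:ℝ) ^ (1:ℝ) :=
      Real.rpow_lt_rpow_of_exponent_lt one_lt_two h1e
    rw [Real.rpow_one] at h
    rw [hrdef]
    exact h
  set H : ℝ := (r - 1) * L + 2 * r with hHdef
  have hH : 0 < H := by
    have h : 0 < (r - 1) * L := mul_pos (by linarith) hL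
    nlinarith
  set s : ℝ := min (1/2 : ℝ) ((2 - r) / (2 * H)) with hsdef
  have hs0 : 0 < s := lt_min (by norm_num) (div_pos (by linarith) (by linarith))
  have hs2 : s ≤ 1/2 := min_le_left _ _
  have hs1 : s < 1 := by linarith
  have hsH : s * (2 * ((r - 1) * L + 2 * r)) ≤ 2 - r := by
    rw [← hHdef]
    exact (le_div_iff₀ (by linarith)).mp (min_le_right _ _)
  clear hsdef hHdef
  clear_value s H
  clear hH
  -- the four points
  set x := p + (1 + s) • (q - p) with hxdef
  set y := p + (1 - s) • (q - p) with hydef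
  set z := p + (-s) • (q - p) with hzdef
  set t := p + s • (q - p) with htdef
  -- distances
  have dxp : dist x p = (1 + s) * L := by
    rw [hxdef, dist_line_p, abs_of_pos (by linarith)]
  have dxq : dist x q = s * L := by
    rw [hxdef, dist_line_q, show (1 + s) - 1 = s by ring, abs_of_pos hs0]
  have dyp : dist y p = (1 - s) * L := by
    rw [hydef, dist_line_p, abs_of_pos (by linarith)]
  have dyq : dist y q = s * L := by
    rw [hydef, dist_line_q, show (1 - s) - 1 = -s by ring, abs_neg, abs_of_pos hs0]
  have dzp : dist z p = s * L := by
    rw [hzdef, dist_line_p, abs_neg, abs_of_pos hs0]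
  have dzq : dist z q = (1 + s) * L := by
    rw [hzdef, dist_line_q, show (-s) - 1 = -(1 + s) by ring, abs_neg,
      abs_of_pos (by linarith)]
  have dtp : dist t p = s * L := by
    rw [htdef, dist_line_p, abs_of_pos hs0]
  have dtq : dist t q = (1 - s) * L := by
    rw [htdef, dist_line_q, show s - 1 = -(1 - s) by ring, abs_neg,
      abs_of_pos (by linarith)]
  have dxy : dist x y = (2 * s) * L := by
    rw [hxdef, hydef, dist_line, show (1 + s) - (1 - s) = 2 * s by ring,
      abs_of_pos (by linarith)]
  have dzt : dist z t = (2 * s) * L := by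
    rw [hzdef, htdef, dist_line, show (-s) - s = -(2 * s) by ring, abs_neg,
      abs_of_pos (by linarith)]
  have dxz : dist x z = (1 + 2 * s) * L := by
    rw [hxdef, hzdef, dist_line, show (1 + s) - (-s) = 1 + 2 * s by ring,
      abs_of_pos (by linarith)]
  have dyt : dist y t = (1 - 2 * s) * L := by
    rw [hydef, htdef, dist_line, show (1 - s) - s = 1 - 2 * s by ring,
      abs_of_nonneg (by linarith)]
  have dxt : dist x t = 1 * L := by
    rw [hxdef, htdef, dist_line, show (1 + s) - s = 1 by ring, abs_one]
  have dyz : dist y z = 1 * L := by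
    rw [hydef, hzdef, dist_line, show (1 - s) - (-s) = 1 by ring, abs_one]
  clear hxdef hydef hzdef htdef
  clear_value x y z t
  -- membership
  have memU : ∀ w : EuclideanSpace ℝ (Fin 2),
      dist w p ≠ 0 → dist w q ≠ 0 → w ∈ ({p, q} : Set _)ᶜ := by
    intro w h1 h2
    simp only [Set.mem_compl_iff, Set.mem_insert_iff, Set.mem_singleton_iff, not_or]
    exact ⟨fun h => h1 (by rw [h, dist_self]), fun h => h2 (by rw [h, dist_self])⟩
  have hsL : (0:ℝ) < s * L := mul_pos hs0 hL
  have h1sL : (0:ℝ) < (1 - s) * L := mul_pos (by linarith) hL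
  have h1psL : (0:ℝ) < (1 + s) * L := mul_pos (by linarith) hL
  have hxU : x ∈ ({p, q} : Set _)ᶜ :=
    memU x (by rw [dxp]; exact ne_of_gt h1psL) (by rw [dxq]; exact ne_of_gt hsL)
  have hyU : y ∈ ({p, q} : Set _)ᶜ :=
    memU y (by rw [dyp]; exact ne_of_gt h1sL) (by rw [dyq]; exact ne_of_gt hsL)
  have hzU : z ∈ ({p, q} : Set _)ᶜ :=
    memU z (by rw [dzp]; exact ne_of_gt hsL) (by rw [dzq]; exact ne_of_gt h1psL)
  have htU : t ∈ ({p, q} : Set _)ᶜ :=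
    memU t (by rw [dtp]; exact ne_of_gt hsL) (by rw [dtq]; exact ne_of_gt h1sL)
  refine ⟨x, hxU, y, hyU, z, hzU, t, htU, ?_⟩
  clear memU hxU hyU hzU htU
  -- the bounds
  set C : ℝ := 1 + 1 / (s * (1 - s) * L) with hCdef
  set D : ℝ := 1 + 2 / (s * L) with hDdef
  have hE : (0:ℝ) < s * (1 - s) * L := by
    have h : (0:ℝ) < 1 - s := by linarith
    positivity
  have hCpos : 0 < C := by rw [hCdef]; positivity
  have hDpos : 0 < D := by rw [hDdef]; positivity
  have hxz : rhoPQ p q x z ≤ Real.log C := by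
    rw [hCdef]
    apply rho_le_log
    · rw [dxz, dxp, dzp]
      exact ratio_bound _ _ _ _ _ (by linarith) (by linarith) hs0 hs0 hs1 hL
        (arith_xz s hs0)
    · rw [dxz, dxq, dzq]
      exact ratio_bound _ _ _ _ _ (by linarith) hs0 (by linarith) hs0 hs1 hL
        (by linarith [arith_xz s hs0])
  have hyt : rhoPQ p q y t ≤ Real.log C := by
    rw [hCdef]
    apply rho_le_log
    · rw [dyt, dyp, dtp]
      exact ratio_bound _ _ _ _ _ (by linarith) (by linarith) hs0 hs0 hs1 hL
        (arith_yt s hs0 hs2)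
    · rw [dyt, dyq, dtq]
      exact ratio_bound _ _ _ _ _ (by linarith) hs0 (by linarith) hs0 hs1 hL
        (by linarith [arith_yt s hs0 hs2])
  have hxt : rhoPQ p q x t ≤ Real.log C := by
    rw [hCdef]
    apply rho_le_log
    · rw [dxt, dxp, dtp]
      exact ratio_bound _ _ _ _ _ (by norm_num) (by linarith) hs0 hs0 hs1 hL
        (arith_xt s hs0)
    · rw [dxt, dxq, dtq]
      exact ratio_bound _ _ _ _ _ (by norm_num) hs0 (by linarith) hs0 hs1 hL
        (by linarith [arith_eq s])
  have hyz : rhoPQ p q y z ≤ Real.log C := by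
    rw [hCdef]
    apply rho_le_log
    · rw [dyz, dyp, dzp]
      exact ratio_bound _ _ _ _ _ (by norm_num) (by linarith) hs0 hs0 hs1 hL
        (arith_eq s)
    · rw [dyz, dyq, dzq]
      exact ratio_bound _ _ _ _ _ (by norm_num) hs0 (by linarith) hs0 hs1 hL
        (by linarith [arith_xt s hs0])
  have hsLne : (s * L) ≠ 0 := ne_of_gt hsL
  have hxy : Real.log D ≤ rhoPQ p q x y := by
    have heq : (1:ℝ) + dist x y / (dist x q * dist y q) = D := by
      rw [dxy, dxq, dyq, hDdef]
      field_simp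
    calc Real.log D = Real.log (1 + dist x y / (dist x q * dist y q)) := by rw [heq]
      _ ≤ rhoPQ p q x y := le_max_right _ _
  have hzt : Real.log D ≤ rhoPQ p q z t := by
    have heq : (1:ℝ) + dist z t / (dist z p * dist t p) = D := by
      rw [dzt, dzp, dtp, hDdef]
      field_simp
    calc Real.log D = Real.log (1 + dist z t / (dist z p * dist t p)) := by rw [heq]
      _ ≤ rhoPQ p q z t := le_max_left _ _
  clear dxp dxq dyp dyq dzp dzq dtp dtq dxy dzt dxz dyt dxt dyz
  -- the key numeric inequality : r * C < D
  have hrC : r * C < D := by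
    have hpoly := poly_ineq s L r hs0 hs2 hL hr1 hr2 hsH
    have h1 : r * C * (s * (1 - s) * L) = r * (s * (1 - s) * L) + r := by
      rw [hCdef, mul_assoc, add_mul, one_div, inv_mul_cancel₀ (ne_of_gt hE)]; ring
    have h2 : D * (s * (1 - s) * L) = s * (1 - s) * L + 2 * (1 - s) := by
      rw [hDdef]; field_simp
    exact (mul_lt_mul_iff_left₀ hE).mp (by rw [h1, h2]; exact hpoly)
  clear hCdef hDdef hsH hE hsL h1sL h1psL hsLne
  clear_value C D
  -- assemble
  have k0 : (0:ℝ) ≤ ε / 2 := by linarith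
  have hA : Real.exp (ε / 2 * rhoPQ p q x z + ε / 2 * rhoPQ p q y t) ≤ C ^ ε := by
    have h : ε / 2 * rhoPQ p q x z + ε / 2 * rhoPQ p q y t ≤ ε * Real.log C := by
      have h1 := mul_le_mul_of_nonneg_left hxz k0
      have h2 := mul_le_mul_of_nonneg_left hyt k0
      linarith
    calc Real.exp _ ≤ Real.exp (ε * Real.log C) := Real.exp_le_exp.mpr h
      _ = C ^ ε := by rw [Real.rpow_def_of_pos hCpos, mul_comm]
  have hB : Real.exp (ε / 2 * rhoPQ p q x t + ε / 2 * rhoPQ p q y z) ≤ C ^ ε := by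
    have h : ε / 2 * rhoPQ p q x t + ε / 2 * rhoPQ p q y z ≤ ε * Real.log C := by
      have h1 := mul_le_mul_of_nonneg_left hxt k0
      have h2 := mul_le_mul_of_nonneg_left hyz k0
      linarith
    calc Real.exp _ ≤ Real.exp (ε * Real.log C) := Real.exp_le_exp.mpr h
      _ = C ^ ε := by rw [Real.rpow_def_of_pos hCpos, mul_comm]
  have hBig : D ^ ε ≤ Real.exp (ε / 2 * rhoPQ p q x y + ε / 2 * rhoPQ p q z t) := by
    have h : ε * Real.log D ≤ ε / 2 * rhoPQ p q x y + ε / 2 * rhoPQ p q z t := by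
      have h1 := mul_le_mul_of_nonneg_left hxy k0
      have h2 := mul_le_mul_of_nonneg_left hzt k0
      linarith
    calc D ^ ε = Real.exp (ε * Real.log D) := by rw [Real.rpow_def_of_pos hDpos, mul_comm]
      _ ≤ Real.exp _ := Real.exp_le_exp.mpr h
  have hmain : 2 * C ^ ε < D ^ ε := by
    have h := Real.rpow_lt_rpow (by positivity : (0:ℝ) ≤ r * C) hrC hεpos
    rw [Real.mul_rpow (by linarith : (0:ℝ) ≤ r) hCpos.le] at h
    have hrε : r ^ ε = 2 := by
      rw [hrdef, ← Real.rpow_mul (by norm_num : (0:ℝ) ≤ 2), one_div,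
        inv_mul_cancel₀ (ne_of_gt hεpos), Real.rpow_one]
    rwa [hrε] at h
  linarith
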